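/- Validity criterion via injectivity (Parry). In the piecewise monotone setting, the φ-expansion is valid if and only if the coding map i is injective on [0,1]∖S. -/

import Mathlib

open Set Filter Topology

/-- A piecewise monotone dynamical system on `[0,1]`: partition points
`0 = a 0 < a 1 < ⋯ < a k = 1` (`k ≥ 2`), branch intervals `I j = (a j, a (j+1))`,
on each of which `f j` is a continuous strictly monotone map into `[0,1]` with
inverse `g j`; `inc j` records whether `f j` is increasing; the covering condition
`(⋃ᵢ Jᵢ) ∩ I j = I j` (i.e. `I j ⊆ ⋃ᵢ Jᵢ`) holds, where `J i = f i '' I i`. -/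
structure PMS where
  k : ℕ
  a : ℕ → ℝ
  f : ℕ → ℝ → ℝ
  g : ℕ → ℝ → ℝ
  inc : ℕ → Bool
  two_le_k : 2 ≤ k
  a_zero : a 0 = 0
  a_last : a k = 1
  a_mono : ∀ i j, i < j → j ≤ k → a i < a j
  f_cont : ∀ j, j < k → ContinuousOn (f j) (Icc (a j) (a (j + 1)))
  f_mono : ∀ j, j < k → inc j = true → StrictMonoOn (f j) (Icc (a j) (a (j + 1)))
  f_anti : ∀ j, j < k → inc j = false → StrictAntiOn (f j) (Icc (a j) (a (j + 1)))
  f_range : ∀ j, j < k → MapsTo (f j) (Icc (a j) (a (j + 1))) (Icc (0 : ℝ) 1)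
  g_inv : ∀ j, j < k → ∀ t ∈ Icc (a j) (a (j + 1)), g j (f j t) = t
  cover : ∀ j, j < k →
    Ioo (a j) (a (j + 1)) ⊆ ⋃ i ∈ Finset.range k, f i '' Ioo (a i) (a (i + 1))

namespace PMS

/-- The open branch interval `I j = (a j, a (j+1))`. -/
def I (P : PMS) (j : ℕ) : Set ℝ := Ioo (P.a j) (P.a (j + 1))

open Classical in
/-- The index of the branch interval containing `x` (junk value `0` if there is none). -/
noncomputable def idx (P : PMS) (x : ℝ) : ℕ :=
  if h : ∃ j, j < P.k ∧ x ∈ P.I j then h.choose else 0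

open Classical in
/-- The dynamics: `T x = f j x` for `x ∈ I j` (junk value `0` on `S₀`, where `T` is
left undefined in the paper). -/
noncomputable def T (P : PMS) (x : ℝ) : ℝ :=
  if ∃ j, j < P.k ∧ x ∈ P.I j then P.f (P.idx x) x else 0

/-- `S₀ = [0,1] ∖ ⋃ⱼ I j`. -/
def S0 (P : PMS) : Set ℝ := Icc 0 1 \ ⋃ j ∈ Finset.range P.k, P.I j

/-- The singular set `S`: points whose orbit hits `S₀`. -/
def S (P : PMS) : Set ℝ :=
  {x ∈ Icc (0 : ℝ) 1 | ∃ m, P.T^[m] x ∈ P.S0 ∧ ∀ i, i < m → P.T^[i] x ∉ P.S0}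

/-- The coding map (itinerary): `(code x) n = j` iff `Tⁿ x ∈ I j` (for `x ∈ [0,1] ∖ S`). -/
noncomputable def code (P : PMS) (x : ℝ) : ℕ → ℕ := fun n => P.idx (P.T^[n] x)

/-- The map `φ̄` on `[0,k]` as a function of `j ∈ A` and `t ∈ [0,1]`, a point of
`[j, j+1]` being written `j + t`. -/
noncomputable def phibarJ (P : PMS) (j : ℕ) (t : ℝ) : ℝ :=
  if P.inc j then
    if t ≤ P.f j (P.a j) then P.a j
    else if P.f j (P.a (j + 1)) ≤ t then P.a (j + 1)
    else P.g j t
  else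
    if t ≤ P.f j (P.a (j + 1)) then P.a (j + 1)
    else if P.f j (P.a j) ≤ t then P.a j
    else P.g j t

/-- `φ̄ₙ(x) = φ̄(x₀ + φ̄(x₁ + ⋯ + φ̄(x_{n-1})⋯))`. -/
noncomputable def phibarN (P : PMS) : ℕ → (ℕ → ℕ) → ℝ
  | 0, _ => 0
  | n + 1, x => P.phibarJ (x 0) (P.phibarN n fun i => x (i + 1))

/-- `φ̄_∞(x) = limₙ φ̄ₙ(x)` (a junk value where the limit does not exist). -/
noncomputable def phibarInf (P : PMS) (x : ℕ → ℕ) : ℝ :=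
  limUnder atTop fun n => P.phibarN n x

/-- The φ-expansion is well-defined: `limₙ φ̄ₙ(x)` exists for every string `x ∈ A^ℕ`. -/
def WellDefined (P : PMS) : Prop :=
  ∀ x : ℕ → ℕ, (∀ n, x n < P.k) →
    ∃ L : ℝ, Tendsto (fun n => P.phibarN n x) atTop (𝓝 L)

/-- The φ-expansion is valid: for every `x ∈ [0,1] ∖ S`, `limₙ φ̄ₙ(i(x)) = x`. -/
def Valid (P : PMS) : Prop :=
  ∀ x ∈ Icc (0 : ℝ) 1 \ P.S,
    Tendsto (fun n => P.phibarN n (P.code x)) atTop (𝓝 x)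

end PMS

namespace PMS

variable (P : PMS)

lemma a_lt {j : ℕ} (hj : j < P.k) : P.a j < P.a (j + 1) :=
  P.a_mono j (j + 1) (Nat.lt_succ_self j) hj

lemma a_le {i j : ℕ} (hij : i ≤ j) (hj : j ≤ P.k) : P.a i ≤ P.a j := by
  rcases eq_or_lt_of_le hij with rfl | h
  · exact le_rfl
  · exact (P.a_mono i j h hj).le

lemma Icc_subset {j : ℕ} (hj : j < P.k) :
    Icc (P.a j) (P.a (j + 1)) ⊆ Icc (0 : ℝ) 1 := by
  rw [← P.a_zero, ← P.a_last]
  exact Icc_subset_Icc (P.a_le (Nat.zero_le j) hj.le) (P.a_le hj le_rfl)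

/-- Lower endpoint of `J j`'s closure. -/
noncomputable def lo (j : ℕ) : ℝ := min (P.f j (P.a j)) (P.f j (P.a (j + 1)))

/-- Upper endpoint of `J j`'s closure. -/
noncomputable def hi (j : ℕ) : ℝ := max (P.f j (P.a j)) (P.f j (P.a (j + 1)))

lemma lo_le_hi (j : ℕ) : P.lo j ≤ P.hi j := min_le_max

lemma phibarJ_char {j : ℕ} (hj : j < P.k) (t : ℝ) :
    P.phibarJ j t ∈ Icc (P.a j) (P.a (j + 1)) ∧
      P.f j (P.phibarJ j t) = max (P.lo j) (min t (P.hi j)) := by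
  have hcd : P.a j ≤ P.a (j + 1) := (P.a_lt hj).le
  have hc : P.a j ∈ Icc (P.a j) (P.a (j + 1)) := ⟨le_rfl, hcd⟩
  have hd : P.a (j + 1) ∈ Icc (P.a j) (P.a (j + 1)) := ⟨hcd, le_rfl⟩
  by_cases hinc : P.inc j
  · have hfcd : P.f j (P.a j) < P.f j (P.a (j + 1)) :=
      P.f_mono j hj hinc hc hd (P.a_lt hj)
    have hlo : P.lo j = P.f j (P.a j) := min_eq_left hfcd.le
    have hhi : P.hi j = P.f j (P.a (j + 1)) := max_eq_right hfcd.le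
    simp only [phibarJ, hinc, if_true]
    split_ifs with h1 h2
    · refine ⟨hc, ?_⟩
      rw [hlo, hhi, min_eq_left (h1.trans hfcd.le), max_eq_left h1]
    · refine ⟨hd, ?_⟩
      rw [hlo, hhi, min_eq_right h2, max_eq_right hfcd.le]
    · push_neg at h1 h2
      have ht : t ∈ Icc (P.f j (P.a j)) (P.f j (P.a (j + 1))) := ⟨h1.le, h2.le⟩
      obtain ⟨s, hs, hfs⟩ := intermediate_value_Icc hcd (P.f_cont j hj) ht
      have hg : P.g j t = s := by rw [← hfs, P.g_inv j hj s hs]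
      rw [hg]
      refine ⟨hs, ?_⟩
      rw [hfs, hlo, hhi, min_eq_left h2.le, max_eq_right h1.le]
  · have hinc' : P.inc j = false := by simpa using hinc
    have hfdc : P.f j (P.a (j + 1)) < P.f j (P.a j) :=
      P.f_anti j hj hinc' hc hd (P.a_lt hj)
    have hlo : P.lo j = P.f j (P.a (j + 1)) := min_eq_right hfdc.le
    have hhi : P.hi j = P.f j (P.a j) := max_eq_left hfdc.le
    simp only [phibarJ, hinc', Bool.false_eq_true, if_false]
    split_ifs with h1 h2
    · refine ⟨hd, ?_⟩
      rw [hlo, hhi, min_eq_left (h1.trans hfdc.le), max_eq_left h1]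
    · refine ⟨hc, ?_⟩
      rw [hlo, hhi, min_eq_right h2, max_eq_right hfdc.le]
    · push_neg at h1 h2
      have ht : t ∈ Icc (P.f j (P.a (j + 1))) (P.f j (P.a j)) := ⟨h1.le, h2.le⟩
      obtain ⟨s, hs, hfs⟩ := intermediate_value_Icc' hcd (P.f_cont j hj) ht
      have hg : P.g j t = s := by rw [← hfs, P.g_inv j hj s hs]
      rw [hg]
      refine ⟨hs, ?_⟩
      rw [hfs, hlo, hhi, min_eq_left h2.le, max_eq_right h1.le]

lemma phibarJ_mem {j : ℕ} (hj : j < P.k) (t : ℝ) :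
    P.phibarJ j t ∈ Icc (P.a j) (P.a (j + 1)) := (P.phibarJ_char hj t).1

lemma f_phibarJ {j : ℕ} (hj : j < P.k) (t : ℝ) :
    P.f j (P.phibarJ j t) = max (P.lo j) (min t (P.hi j)) := (P.phibarJ_char hj t).2

lemma f_mem_JIcc {j : ℕ} (hj : j < P.k) {s : ℝ}
    (hs : s ∈ Icc (P.a j) (P.a (j + 1))) :
    P.lo j ≤ P.f j s ∧ P.f j s ≤ P.hi j := by
  have hcd : P.a j ≤ P.a (j + 1) := (P.a_lt hj).le
  have hc : P.a j ∈ Icc (P.a j) (P.a (j + 1)) := ⟨le_rfl, hcd⟩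
  have hd : P.a (j + 1) ∈ Icc (P.a j) (P.a (j + 1)) := ⟨hcd, le_rfl⟩
  by_cases hinc : P.inc j
  · have m := (P.f_mono j hj hinc).monotoneOn
    exact ⟨(min_le_left _ _).trans (m hc hs hs.1), (m hs hd hs.2).trans (le_max_right _ _)⟩
  · have hinc' : P.inc j = false := by simpa using hinc
    have m := (P.f_anti j hj hinc').antitoneOn
    exact ⟨(min_le_right _ _).trans (m hs hd hs.2), (m hc hs hs.1).trans (le_max_left _ _)⟩

lemma phibarJ_inv {j : ℕ} (hj : j < P.k) {s : ℝ}
    (hs : s ∈ Icc (P.a j) (P.a (j + 1))) : P.phibarJ j (P.f j s) = s := by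
  have h1 := P.f_phibarJ hj (P.f j s)
  obtain ⟨hl, hh⟩ := P.f_mem_JIcc hj hs
  rw [min_eq_left hh, max_eq_right hl] at h1
  by_cases hinc : P.inc j
  · exact (P.f_mono j hj hinc).injOn (P.phibarJ_mem hj _) hs h1
  · have hinc' : P.inc j = false := by simpa using hinc
    exact (P.f_anti j hj hinc').injOn (P.phibarJ_mem hj _) hs h1

lemma phibarJ_monoAnti {j : ℕ} (hj : j < P.k) :
    Monotone (P.phibarJ j) ∨ Antitone (P.phibarJ j) := by
  have key : ∀ s t : ℝ, s ≤ t →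
      P.f j (P.phibarJ j s) ≤ P.f j (P.phibarJ j t) := by
    intro s t hst
    rw [P.f_phibarJ hj, P.f_phibarJ hj]
    exact max_le_max le_rfl (min_le_min hst le_rfl)
  by_cases hinc : P.inc j
  · left
    intro s t hst
    exact ((P.f_mono j hj hinc).le_iff_le (P.phibarJ_mem hj s)
      (P.phibarJ_mem hj t)).mp (key s t hst)
  · right
    intro s t hst
    have hinc' : P.inc j = false := by simpa using hinc
    exact ((P.f_anti j hj hinc').le_iff_ge (P.phibarJ_mem hj s)
      (P.phibarJ_mem hj t)).mp (key s t hst)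
end PMS

/-- Clamping auxiliary lemma. -/
lemma lt_of_clamp_lt {lo hi p s : ℝ} (hs : s ≤ hi) (h : max lo (min p hi) < s) :
    p < s := by
  by_contra hns
  push_neg at hns
  exact absurd h (not_lt.mpr ((le_min hns hs).trans (le_max_right _ _)))

/-- Clamping auxiliary lemma. -/
lemma lt_of_lt_clamp {lo hi q s : ℝ} (hs : lo ≤ s) (h : s < max lo (min q hi)) :
    s < q := by
  rcases lt_max_iff.mp h with h1 | h1
  · exact absurd h1 (not_lt.mpr hs)
  · exact h1.trans_le (min_le_left _ _)

namespace PMS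

variable (P : PMS)

/-- The `n`-fold composition `φ̄_{e 0} ∘ φ̄_{e 1} ∘ ⋯ ∘ φ̄_{e (n-1)}`. -/
noncomputable def Phi (P : PMS) : (ℕ → ℕ) → ℕ → ℝ → ℝ
  | _, 0, t => t
  | e, n + 1, t => P.phibarJ (e 0) (P.Phi (fun i => e (i + 1)) n t)

lemma phibarN_eq (n : ℕ) (e : ℕ → ℕ) : P.phibarN n e = P.Phi e n 0 := by
  induction n generalizing e with
  | zero => rfl
  | succ n ih => simp only [phibarN, Phi, ih]

lemma Phi_mem {e : ℕ → ℕ} (he : ∀ m, e m < P.k) (n : ℕ) {t : ℝ}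
    (ht : t ∈ Icc (0 : ℝ) 1) : P.Phi e n t ∈ Icc (0 : ℝ) 1 := by
  cases n with
  | zero => exact ht
  | succ n => exact P.Icc_subset (he 0) (P.phibarJ_mem (he 0) _)

lemma Phi_monoAnti {e : ℕ → ℕ} (he : ∀ m, e m < P.k) (n : ℕ) :
    Monotone (P.Phi e n) ∨ Antitone (P.Phi e n) := by
  induction n generalizing e with
  | zero => exact Or.inl monotone_id
  | succ n ih =>
    rcases P.phibarJ_monoAnti (he 0) with h1 | h1 <;>
      rcases ih (fun m => he (m + 1)) with h2 | h2
    · exact Or.inl (h1.comp h2)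
    · exact Or.inr (h1.comp_antitone h2)
    · exact Or.inr (h1.comp_monotone h2)
    · exact Or.inl (h1.comp h2)

lemma Phi_succ_right (n : ℕ) (e : ℕ → ℕ) (t : ℝ) :
    P.Phi e (n + 1) t = P.Phi e n (P.phibarJ (e n) t) := by
  induction n generalizing e t with
  | zero => rfl
  | succ n ih =>
    show P.phibarJ (e 0) (P.Phi (fun i => e (i + 1)) (n + 1) t) = _
    rw [ih]
    rfl

/-- Lower endpoint of the `n`-th cylinder-interval. -/
noncomputable def lb (P : PMS) (e : ℕ → ℕ) (n : ℕ) : ℝ :=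
  min (P.Phi e n 0) (P.Phi e n 1)

/-- Upper endpoint of the `n`-th cylinder-interval. -/
noncomputable def ub (P : PMS) (e : ℕ → ℕ) (n : ℕ) : ℝ :=
  max (P.Phi e n 0) (P.Phi e n 1)

lemma Phi_mem_bounds {e : ℕ → ℕ} (he : ∀ m, e m < P.k) (n : ℕ) {t : ℝ}
    (ht : t ∈ Icc (0 : ℝ) 1) : P.Phi e n t ∈ Icc (P.lb e n) (P.ub e n) := by
  rcases P.Phi_monoAnti he n with h | h
  · exact ⟨(min_le_left _ _).trans (h ht.1), (h ht.2).trans (le_max_right _ _)⟩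
  · exact ⟨(min_le_right _ _).trans (h ht.2), (h ht.1).trans (le_max_left _ _)⟩

lemma lb_le_succ {e : ℕ → ℕ} (he : ∀ m, e m < P.k) (n : ℕ) :
    P.lb e n ≤ P.lb e (n + 1) ∧ P.ub e (n + 1) ≤ P.ub e n := by
  have h0 : P.Phi e (n + 1) 0 ∈ Icc (P.lb e n) (P.ub e n) := by
    rw [P.Phi_succ_right]
    exact P.Phi_mem_bounds he n (P.Icc_subset (he n) (P.phibarJ_mem (he n) 0))
  have h1 : P.Phi e (n + 1) 1 ∈ Icc (P.lb e n) (P.ub e n) := by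
    rw [P.Phi_succ_right]
    exact P.Phi_mem_bounds he n (P.Icc_subset (he n) (P.phibarJ_mem (he n) 1))
  exact ⟨le_min h0.1 h1.1, max_le h0.2 h1.2⟩
lemma I_subset_Icc {j : ℕ} (hj : j < P.k) : P.I j ⊆ Icc (0 : ℝ) 1 :=
  fun _ hw => P.Icc_subset hj (Ioo_subset_Icc_self hw)

lemma I_unique {i j : ℕ} (hi : i < P.k) (hj : j < P.k) {w : ℝ}
    (hwi : w ∈ P.I i) (hwj : w ∈ P.I j) : i = j := by
  rcases lt_trichotomy i j with h | h | h
  · exact absurd ((hwi.2.trans_le (P.a_le h hj.le)).trans hwj.1) (lt_irrefl w)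
  · exact h
  · exact absurd ((hwj.2.trans_le (P.a_le h hi.le)).trans hwi.1) (lt_irrefl w)

lemma idx_eq {j : ℕ} (hj : j < P.k) {w : ℝ} (hw : w ∈ P.I j) : P.idx w = j := by
  have hex : ∃ i, i < P.k ∧ w ∈ P.I i := ⟨j, hj, hw⟩
  unfold idx
  rw [dif_pos hex]
  exact P.I_unique hex.choose_spec.1 hj hex.choose_spec.2 hw

lemma T_eq {j : ℕ} (hj : j < P.k) {w : ℝ} (hw : w ∈ P.I j) : P.T w = P.f j w := by
  have hex : ∃ i, i < P.k ∧ w ∈ P.I i := ⟨j, hj, hw⟩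
  unfold T
  rw [if_pos hex, P.idx_eq hj hw]

lemma orbit_notS0 {x : ℝ} (hx : x ∈ Icc (0 : ℝ) 1 \ P.S) (n : ℕ) :
    P.T^[n] x ∉ P.S0 := by
  intro hn
  have hex : ∃ n, P.T^[n] x ∈ P.S0 := ⟨n, hn⟩
  classical
  refine hx.2 ?_
  exact ⟨hx.1, Nat.find hex, Nat.find_spec hex, fun i hi => Nat.find_min hex hi⟩

lemma exists_I {y : ℝ} (hy : y ∈ Icc (0 : ℝ) 1) (hy2 : y ∉ P.S0) :
    ∃ j, j < P.k ∧ y ∈ P.I j := by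
  by_contra h
  push_neg at h
  refine hy2 ⟨hy, fun hmem => ?_⟩
  obtain ⟨j, hj, hyj⟩ : ∃ j, j < P.k ∧ y ∈ P.I j := by
    simpa only [mem_iUnion, Finset.mem_range, exists_prop] using hmem
  exact h j hj hyj

lemma orbit_mem {x : ℝ} (hx : x ∈ Icc (0 : ℝ) 1 \ P.S) (n : ℕ) :
    ∃ j, j < P.k ∧ P.T^[n] x ∈ P.I j := by
  induction n with
  | zero =>
    exact P.exists_I (by simpa using hx.1) (by simpa using P.orbit_notS0 hx 0)
  | succ n ih =>
    obtain ⟨j, hj, hmem⟩ := ih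
    have hTn : P.T^[n + 1] x = P.f j (P.T^[n] x) := by
      rw [Function.iterate_succ_apply', P.T_eq hj hmem]
    have h01 : P.T^[n + 1] x ∈ Icc (0 : ℝ) 1 := by
      rw [hTn]
      exact P.f_range j hj (Ioo_subset_Icc_self hmem)
    exact P.exists_I h01 (P.orbit_notS0 hx (n + 1))
lemma code_spec {x : ℝ} (hx : x ∈ Icc (0 : ℝ) 1 \ P.S) (n : ℕ) :
    P.code x n < P.k ∧ P.T^[n] x ∈ P.I (P.code x n) := by
  obtain ⟨j, hj, hmem⟩ := P.orbit_mem hx n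
  have : P.code x n = j := P.idx_eq hj hmem
  rw [this]
  exact ⟨hj, hmem⟩

lemma T_mem {x : ℝ} (hx : x ∈ Icc (0 : ℝ) 1 \ P.S) :
    P.T x ∈ Icc (0 : ℝ) 1 \ P.S := by
  constructor
  · obtain ⟨j, hj, hmem⟩ := P.orbit_mem hx 1
    exact P.I_subset_Icc hj (by simpa using hmem)
  · rintro ⟨-, m, hm, -⟩
    exact P.orbit_notS0 hx (m + 1) (by rwa [Function.iterate_succ_apply])

lemma code_shift {x : ℝ} : (fun i => P.code x (i + 1)) = P.code (P.T x) := by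
  funext i
  simp only [code, Function.iterate_succ_apply]

lemma Phi_code {x : ℝ} (hx : x ∈ Icc (0 : ℝ) 1 \ P.S) (n : ℕ) :
    P.Phi (P.code x) n (P.T^[n] x) = x := by
  induction n generalizing x with
  | zero => rfl
  | succ n ih =>
    show P.phibarJ (P.code x 0) (P.Phi (fun i => P.code x (i + 1)) n (P.T^[n + 1] x)) = x
    rw [P.code_shift, Function.iterate_succ_apply, ih (P.T_mem hx)]
    obtain ⟨hj, hmem⟩ := P.code_spec hx 0
    simp only [Function.iterate_zero_apply] at hmem
    rw [P.T_eq hj hmem]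
    exact P.phibarJ_inv hj (Ioo_subset_Icc_self hmem)

lemma key_step {j : ℕ} (hj : j < P.k) {p q w : ℝ}
    (h1 : min (P.phibarJ j p) (P.phibarJ j q) < w)
    (h2 : w < max (P.phibarJ j p) (P.phibarJ j q)) :
    w ∈ P.I j ∧ min p q < P.f j w ∧ P.f j w < max p q := by
  have hp := P.phibarJ_mem hj p
  have hq := P.phibarJ_mem hj q
  have hwI : w ∈ P.I j :=
    ⟨lt_of_le_of_lt (le_min hp.1 hq.1) h1, lt_of_lt_of_le h2 (max_le hp.2 hq.2)⟩
  have hwIcc : w ∈ Icc (P.a j) (P.a (j + 1)) := Ioo_subset_Icc_self hwI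
  refine ⟨hwI, ?_⟩
  have main : ∀ p q : ℝ, P.phibarJ j p < w → w < P.phibarJ j q →
      min p q < P.f j w ∧ P.f j w < max p q := by
    intro p q hpw hwq
    by_cases hinc : P.inc j
    · have m := P.f_mono j hj hinc
      have h3 : P.f j (P.phibarJ j p) < P.f j w := m (P.phibarJ_mem hj p) hwIcc hpw
      have h4 : P.f j w < P.f j (P.phibarJ j q) := m hwIcc (P.phibarJ_mem hj q) hwq
      rw [P.f_phibarJ hj] at h3 h4
      have hfl : P.lo j ≤ P.f j w := (le_max_left _ _).trans h3.le
      have hfh : P.f j w ≤ P.hi j :=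
        h4.le.trans (max_le (P.lo_le_hi j) (min_le_right _ _))
      exact ⟨lt_of_le_of_lt (min_le_left _ _) (lt_of_clamp_lt hfh h3),
        lt_of_lt_of_le (lt_of_lt_clamp hfl h4) (le_max_right _ _)⟩
    · have hinc' : P.inc j = false := by simpa using hinc
      have m := P.f_anti j hj hinc'
      have h3 : P.f j w < P.f j (P.phibarJ j p) := m (P.phibarJ_mem hj p) hwIcc hpw
      have h4 : P.f j (P.phibarJ j q) < P.f j w := m hwIcc (P.phibarJ_mem hj q) hwq
      rw [P.f_phibarJ hj] at h3 h4
      have hfl : P.lo j ≤ P.f j w := (le_max_left _ _).trans h4.le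
      have hfh : P.f j w ≤ P.hi j :=
        h3.le.trans (max_le (P.lo_le_hi j) (min_le_right _ _))
      exact ⟨lt_of_le_of_lt (min_le_right _ _) (lt_of_clamp_lt hfh h4),
        lt_of_lt_of_le (lt_of_lt_clamp hfl h3) (le_max_left _ _)⟩
  rcases le_total (P.phibarJ j p) (P.phibarJ j q) with h | h
  · rw [min_eq_left h] at h1
    rw [max_eq_right h] at h2
    exact main p q h1 h2
  · rw [min_eq_right h] at h1
    rw [max_eq_left h] at h2
    have := main q p h1 h2
    rwa [min_comm, max_comm] at this
lemma key_claim : ∀ (n : ℕ) (e : ℕ → ℕ), (∀ m, e m < P.k) → ∀ w : ℝ,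
    P.lb e n < w → w < P.ub e n → ∀ m < n, P.T^[m] w ∈ P.I (e m) := by
  intro n
  induction n with
  | zero => intro e he w h1 h2 m hm; exact absurd hm (Nat.not_lt_zero m)
  | succ n ih =>
    intro e he w h1 h2 m hm
    have h1' : min (P.phibarJ (e 0) (P.Phi (fun i => e (i + 1)) n 0))
        (P.phibarJ (e 0) (P.Phi (fun i => e (i + 1)) n 1)) < w := h1
    have h2' : w < max (P.phibarJ (e 0) (P.Phi (fun i => e (i + 1)) n 0))
        (P.phibarJ (e 0) (P.Phi (fun i => e (i + 1)) n 1)) := h2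
    obtain ⟨hwI, hf1, hf2⟩ := P.key_step (he 0) h1' h2'
    have hTw : P.T w = P.f (e 0) w := P.T_eq (he 0) hwI
    cases m with
    | zero => exact hwI
    | succ m =>
      rw [Function.iterate_succ_apply, hTw]
      exact ih (fun i => e (i + 1)) (fun i => he (i + 1)) _ hf1 hf2 m
        (Nat.lt_of_succ_lt_succ hm)

end PMS

/-- **Validity criterion via injectivity (Parry).** In the piecewise monotone setting,
the φ-expansion is valid if and only if the coding map `i` is injective on `[0,1] ∖ S`. -/
theorem validity_iff_injective (P : PMS) :
    P.Valid ↔ Set.InjOn P.code (Set.Icc (0 : ℝ) 1 \ P.S) := by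
  constructor
  · intro hV x hx y hy hcode
    refine tendsto_nhds_unique (hV x hx) ?_
    rw [hcode]
    exact hV y hy
  · intro hInj x hx
    have he : ∀ m, P.code x m < P.k := fun m => (P.code_spec hx m).1
    set e := P.code x with he_def
    have hx01 : ∀ n, P.T^[n] x ∈ Icc (0 : ℝ) 1 := fun n =>
      P.I_subset_Icc (he n) (P.code_spec hx n).2
    have hxuv : ∀ n, x ∈ Icc (P.lb e n) (P.ub e n) := fun n => by
      have h := P.Phi_mem_bounds he n (hx01 n)
      rwa [P.Phi_code hx n] at h
    have hbuv : ∀ n, P.phibarN n e ∈ Icc (P.lb e n) (P.ub e n) := fun n => by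
      rw [P.phibarN_eq]
      exact P.Phi_mem_bounds he n ⟨le_rfl, zero_le_one⟩
    have hlbm : Monotone (P.lb e) :=
      monotone_nat_of_le_succ fun n => (P.lb_le_succ he n).1
    have hubm : Antitone (P.ub e) :=
      antitone_nat_of_succ_le fun n => (P.lb_le_succ he n).2
    have hlub : ∀ n m, P.lb e n ≤ P.ub e m := fun n m =>
      (hlbm (le_max_left n m)).trans ((min_le_max).trans (hubm (le_max_right n m)))
    have hbddA : BddAbove (range (P.lb e)) := by
      refine ⟨P.ub e 0, ?_⟩
      rintro y ⟨n, rfl⟩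
      exact hlub n 0
    have hbddB : BddBelow (range (P.ub e)) := by
      refine ⟨P.lb e 0, ?_⟩
      rintro y ⟨n, rfl⟩
      exact hlub 0 n
    set u := ⨆ n, P.lb e n with hu_def
    set v := ⨅ n, P.ub e n with hv_def
    have hu : Tendsto (P.lb e) atTop (𝓝 u) := tendsto_atTop_ciSup hlbm hbddA
    have hv : Tendsto (P.ub e) atTop (𝓝 v) := tendsto_atTop_ciInf hubm hbddB
    have hun : ∀ n, P.lb e n ≤ u := fun n => le_ciSup hbddA n
    have hvn : ∀ n, v ≤ P.ub e n := fun n => ciInf_le hbddB n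
    have hxu : u ≤ x := ciSup_le fun n => (hxuv n).1
    have hxv : x ≤ v := le_ciInf fun n => (hxuv n).2
    rcases eq_or_lt_of_le (hxu.trans hxv) with heq | hlt
    · have hux : u = x := le_antisymm hxu (hxv.trans heq.ge)
      have hvx : v = x := by rw [← heq, hux]
      have hu' : Tendsto (P.lb e) atTop (𝓝 x) := hux ▸ hu
      have hv' : Tendsto (P.ub e) atTop (𝓝 x) := hvx ▸ hv
      exact tendsto_of_tendsto_of_tendsto_of_le_of_le hu' hv'
        (fun n => (hbuv n).1) (fun n => (hbuv n).2)
    · exfalso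
      set y := u + (v - u) / 3 with hy_def
      set z := u + 2 * (v - u) / 3 with hz_def
      have huy : u < y := by rw [hy_def]; linarith
      have hyz : y < z := by rw [hy_def, hz_def]; linarith
      have hzv : z < v := by rw [hz_def]; linarith
      have hycode : ∀ m, P.T^[m] y ∈ P.I (e m) := fun m =>
        P.key_claim (m + 1) e he y ((hun (m + 1)).trans_lt huy)
          (lt_of_lt_of_le (hyz.trans hzv) (hvn (m + 1))) m (Nat.lt_succ_self m)
      have hzcode : ∀ m, P.T^[m] z ∈ P.I (e m) := fun m =>
        P.key_claim (m + 1) e he z ((hun (m + 1)).trans_lt (huy.trans hyz))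
          (hzv.trans_le (hvn (m + 1))) m (Nat.lt_succ_self m)
      have hmemset : ∀ w : ℝ, (∀ m, P.T^[m] w ∈ P.I (e m)) →
          w ∈ Icc (0 : ℝ) 1 \ P.S ∧ P.code w = e := by
        intro w hw
        have hw01 : w ∈ Icc (0 : ℝ) 1 := P.I_subset_Icc (he 0) (by simpa using hw 0)
        have hwS : w ∉ P.S := by
          rintro ⟨-, m, hm, -⟩
          exact hm.2 (mem_iUnion₂.mpr ⟨e m, Finset.mem_range.mpr (he m), hw m⟩)
        refine ⟨⟨hw01, hwS⟩, ?_⟩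
        funext m
        exact P.idx_eq (he m) (hw m)
      obtain ⟨hyset, hycode'⟩ := hmemset y hycode
      obtain ⟨hzset, hzcode'⟩ := hmemset z hzcode
      exact absurd (hInj hyset hzset (hycode'.trans hzcode'.symm)) (ne_of_lt hyz)
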